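/- Let s₁, s₂ ∈ ℂ be nonzero and u ∈ ℂ. Define A = [[s₁, 1], [0, s₁⁻¹]], B = [[s₂, 0], [u, s₂⁻¹]], C = B·A·B⁻¹·A⁻¹, D = A⁻¹·B⁻¹·A·B, and let v = tr(C). Let S : ℤ → ℂ satisfy S(0) = 1, S(1) = v, and S(k+1) = v·S(k) − S(k−1) for every integer k. Then for every natural number n, the (1,1) entry of the matrix Cⁿ·A·Dⁿ equals (C₁₂D₂₁s₁⁻¹ + C₁₁D₂₁ + C₁₁D₁₁s₁)·S(n−1)² + s₁·S(n−2)² − (D₂₁ + C₁₁s₁ + D₁₁s₁)·S(n−1)·S(n−2). -/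

import Mathlib

lemma sq_helper (M : Matrix (Fin 2) (Fin 2) ℂ) (h : M.det = 1) :
    M * M = (Matrix.trace M) • M - 1 := by
  rw [Matrix.det_fin_two] at h
  ext i j
  fin_cases i <;> fin_cases j <;>
    simp [Matrix.mul_apply, Fin.sum_univ_two, Matrix.trace_fin_two, Matrix.smul_apply,
      Matrix.sub_apply, Matrix.one_apply] <;>
    first | linear_combination -h | ring1

theorem w11_formula_odd_twisted_whitehead
    (s₁ s₂ u : ℂ) (hs₁ : s₁ ≠ 0) (hs₂ : s₂ ≠ 0)
    (A B C D : Matrix (Fin 2) (Fin 2) ℂ)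
    (hA : A = !![s₁, 1; 0, s₁⁻¹]) (hB : B = !![s₂, 0; u, s₂⁻¹])
    (hC : C = B * A * B⁻¹ * A⁻¹) (hD : D = A⁻¹ * B⁻¹ * A * B)
    (v : ℂ) (hv : v = Matrix.trace C)
    (S : ℤ → ℂ)
    (h0 : S 0 = 1) (h1 : S 1 = v)
    (hrec : ∀ k : ℤ, S (k + 1) = v * S k - S (k - 1)) :
    ∀ n : ℕ, (C ^ n * A * D ^ n) 0 0
      = (C 0 1 * D 1 0 * s₁⁻¹ + C 0 0 * D 1 0 + C 0 0 * D 0 0 * s₁) * S ((n : ℤ) - 1) ^ 2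
        + s₁ * S ((n : ℤ) - 2) ^ 2
        - (D 1 0 + C 0 0 * s₁ + D 0 0 * s₁) * S ((n : ℤ) - 1) * S ((n : ℤ) - 2) := by
  -- explicit inverses
  have hAinv : A⁻¹ = !![s₁⁻¹, -1; 0, s₁] := by
    rw [hA]
    apply Matrix.inv_eq_right_inv
    ext i j
    fin_cases i <;> fin_cases j <;>
      simp [Matrix.mul_apply, Fin.sum_univ_two, Matrix.one_apply] <;> field_simp
  have hBinv : B⁻¹ = !![s₂⁻¹, 0; -u, s₂] := by
    rw [hB]
    apply Matrix.inv_eq_right_inv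
    ext i j
    fin_cases i <;> fin_cases j <;>
      simp [Matrix.mul_apply, Fin.sum_univ_two, Matrix.one_apply] <;> field_simp <;> ring
  -- determinants
  have hdA : A.det = 1 := by rw [hA, Matrix.det_fin_two_of]; field_simp; ring
  have hdB : B.det = 1 := by rw [hB, Matrix.det_fin_two_of]; field_simp; ring
  have hdAi : (A⁻¹).det = 1 := by rw [hAinv, Matrix.det_fin_two_of]; field_simp; ring
  have hdBi : (B⁻¹).det = 1 := by rw [hBinv, Matrix.det_fin_two_of]; field_simp; ring
  have hdC : C.det = 1 := by
    rw [hC, Matrix.det_mul, Matrix.det_mul, Matrix.det_mul, hdA, hdB, hdAi, hdBi]; ring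
  have hdD : D.det = 1 := by
    rw [hD, Matrix.det_mul, Matrix.det_mul, Matrix.det_mul, hdA, hdB, hdAi, hdBi]; ring
  -- trace of D equals v
  have hvD : Matrix.trace D = v := by
    rw [hv, hC, hD, hAinv, hBinv, hA, hB]
    simp [Matrix.mul_fin_two, Matrix.trace_fin_two]
    field_simp
    ring
  have hCC : C * C = v • C - 1 := by rw [hv]; exact sq_helper C hdC
  have hDD : D * D = v • D - 1 := by rw [← hvD]; exact sq_helper D hdD
  -- special values of S
  have hm1 : S (-1) = 0 := by
    have := hrec 0
    norm_num [h0, h1] at this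
    linear_combination this
  have hm2 : S (-2) = -1 := by
    have := hrec (-1)
    norm_num [h0, hm1] at this
    linear_combination this
  -- power formula
  have key : ∀ M : Matrix (Fin 2) (Fin 2) ℂ, M * M = v • M - 1 →
      ∀ n : ℕ, M ^ n = S ((n : ℤ) - 1) • M - S ((n : ℤ) - 2) • 1 := by
    intro M hM n
    induction n with
    | zero => simp [hm1, hm2]
    | succ n ih =>
      have e1 : ((n : ℤ) + 1) - 1 = (n : ℤ) := by ring
      have e2 : ((n : ℤ) + 1) - 2 = (n : ℤ) - 1 := by ring
      have hSn : S (n : ℤ) = v * S ((n : ℤ) - 1) - S ((n : ℤ) - 2) := by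
        have := hrec ((n : ℤ) - 1)
        rw [show (n : ℤ) - 1 + 1 = (n : ℤ) by ring, show (n : ℤ) - 1 - 1 = (n : ℤ) - 2 by ring] at this
        exact this
      push_cast [pow_succ, ih, e1, e2]
      rw [sub_mul, smul_mul_assoc, smul_mul_assoc, hM, one_mul, hSn]
      module
  intro n
  rw [key C hCC n, key D hDD n, hA]
  simp [Matrix.mul_apply, Fin.sum_univ_two, Matrix.sub_apply, Matrix.smul_apply,
    Matrix.one_apply]
  ring
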